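/- For every set X ⊆ ℕ, L(U_{X,2}) = L_X, where U_{X,2} = {Y ⊆ ℕ : Y ∩ X has at least two elements}, L_X = {Y ⊆ ℕ : Y ∩ X is infinite}, and L(A) = {Z ⊆ ℕ : for every finite cover Z₀,…,Z_k of Z there is some i with Z_i ∈ A}. -/
import Mathlib


/-- `LargestPR A` is the largest partition regular subclass of `A` (when nonempty):
the sets all of whose finite covers have a part in `A`. -/
def LargestPR (A : Set (Set ℕ)) : Set (Set ℕ) :=
  {Z : Set ℕ | ∀ (k : ℕ) (Y : Fin (k + 1) → Set ℕ), Z ⊆ ⋃ i, Y i → ∃ i, Y i ∈ A}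

/-- For every `X ⊆ ℕ`, the largest partition regular subclass of
`U_{X,2} = {Y : Y ∩ X has at least two elements}` is `L_X = {Y : Y ∩ X is infinite}`. -/
theorem largestPR_UX2_eq_LX (X : Set ℕ) :
    LargestPR {Y : Set ℕ | ∃ a ∈ Y ∩ X, ∃ b ∈ Y ∩ X, a ≠ b} =
      {Y : Set ℕ | (Y ∩ X).Infinite} := by
  ext Z
  simp only [LargestPR, Set.mem_setOf_eq]
  constructor
  · intro h
    by_contra hinf
    rw [Set.not_infinite] at hinf
    set S := hinf.toFinset with hS
    set n := S.card with hn
    set e := S.equivFin with he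
    have hcov : Z ⊆ ⋃ i : Fin (n + 1),
        (if h : (i : ℕ) < n then {((e.symm ⟨i, h⟩ : ℕ))} else Xᶜ) := by
      intro z hz
      by_cases hzX : z ∈ X
      · have hzS : z ∈ S := by simp [hS, hz, hzX]
        refine Set.mem_iUnion.2
          ⟨⟨e ⟨z, hzS⟩, (e ⟨z, hzS⟩).2.trans (Nat.lt_succ_self n)⟩, ?_⟩
        rw [dif_pos]
        · simp
        · exact (e ⟨z, hzS⟩).2
      · exact Set.mem_iUnion.2 ⟨⟨n, Nat.lt_succ_self n⟩, by simp [hzX]⟩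
    obtain ⟨i, a, ⟨ha, haX⟩, b, ⟨hb, hbX⟩, hab⟩ := h n _ hcov
    by_cases hi : (i : ℕ) < n
    · rw [dif_pos hi] at ha hb
      exact hab ((Set.mem_singleton_iff.mp ha).trans (Set.mem_singleton_iff.mp hb).symm)
    · rw [dif_neg hi] at ha
      exact ha haX
  · intro hinf k Y hcov
    by_contra hA
    push_neg at hA
    have hfin : ∀ i, (Y i ∩ X).Finite := by
      intro i
      apply Set.Subsingleton.finite
      intro a ha b hb
      exact hA i a ha b hb
    exact hinf (Set.Finite.subset (Set.finite_iUnion hfin)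
      (fun z hz => by
        obtain ⟨i, hi⟩ := Set.mem_iUnion.1 (hcov hz.1)
        exact Set.mem_iUnion.2 ⟨i, hi, hz.2⟩))
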